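/- (Upper estimate) Let R > q > p > 1 and f(z) = Σ_{k≥0} c_k z^k analytic in D_R = {|z| < R}. Fix 1 ≤ r < p·r_1/q < p·R/q. Then for all |z| ≤ r and n ∈ ℕ, |L_{n,p,q}(f)(z) - f(z)| ≤ (p^n/[n]_{p,q}) · M_{r_1,p,q}(f), where M_{r_1,p,q}(f) = (p(q-p+1)/(q-p)^2) · Σ_{k=0}^{∞} |c_k|(k+1)r_1^k < ∞. -/

import Mathlib

set_option maxHeartbeats 1000000


/-- The `(p,q)`-integer `[n]_{p,q} = (q^n - p^n)/(q - p)`. -/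
noncomputable def pqInt (p q : ℝ) (n : ℕ) : ℝ := (q ^ n - p ^ n) / (q - p)

/-- The `(p,q)`-factorial `[n]_{p,q}! = [1]_{p,q}·[2]_{p,q}···[n]_{p,q}`. -/
noncomputable def pqFact (p q : ℝ) : ℕ → ℝ
  | 0 => 1
  | n + 1 => pqFact p q n * pqInt p q (n + 1)

/-- The `(p,q)`-binomial coefficient. -/
noncomputable def pqBinom (p q : ℝ) (n k : ℕ) : ℝ :=
  pqFact p q n / (pqFact p q k * pqFact p q (n - k))

/-- The `(p,q)`-derivative, with `D_{p,q}f(0) = f'(0)`. -/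
noncomputable def pqDeriv (p q : ℝ) (f : ℂ → ℂ) (x : ℂ) : ℂ :=
  if x = 0 then deriv f 0 else (f ((p : ℂ) * x) - f ((q : ℂ) * x)) / (((p : ℂ) - q) * x)

/-- Iterated `(p,q)`-derivative `D_{p,q}^{(k)}`. -/
noncomputable def pqDerivIter (p q : ℝ) : ℕ → (ℂ → ℂ) → (ℂ → ℂ)
  | 0, f => f
  | k + 1, f => pqDeriv p q (pqDerivIter p q k f)

/-- The complex `(p,q)`-Lorentz polynomial
`L_{n,p,q}(f)(z) = Σ_{k=0}^{n} q^{k(k-1)/2} binom(n,k)_{p,q} (z/[n]_{p,q})^k D_{p,q}^{(k)}f(0)`. -/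
noncomputable def lorentz (p q : ℝ) (n : ℕ) (f : ℂ → ℂ) (z : ℂ) : ℂ :=
  ∑ k ∈ Finset.range (n + 1),
    (q : ℂ) ^ (k * (k - 1) / 2) * (pqBinom p q n k : ℂ) *
      (z / (pqInt p q n : ℂ)) ^ k * pqDerivIter p q k f 0



section
variable {p q : ℝ} (hp : 1 < p) (hpq : p < q)
include hp hpq

lemma pqInt_pos {n : ℕ} (hn : 1 ≤ n) : 0 < pqInt p q n := by
  have h0 : (0:ℝ) < p := lt_trans zero_lt_one hp
  have : p ^ n < q ^ n := pow_lt_pow_left₀ hpq h0.le (by omega)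
  have : 0 < q ^ n - p ^ n := by linarith
  exact div_pos this (by linarith)

lemma pqInt_one : pqInt p q 1 = 1 := by
  unfold pqInt
  rw [pow_one, pow_one, div_self (by linarith)]

lemma pqFact_pos (n : ℕ) : 0 < pqFact p q n := by
  induction n with
  | zero => exact zero_lt_one
  | succ m ih => exact mul_pos ih (pqInt_pos hp hpq (by omega))

lemma pqFact_eq_prod (n : ℕ) : pqFact p q n = ∏ i ∈ Finset.range n, pqInt p q (i + 1) := by
  induction n with
  | zero => rfl
  | succ m ih => rw [Finset.prod_range_succ, ← ih]; rfl

lemma key' {n : ℕ} : ∀ k, k ≤ n →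
    (q:ℝ) ^ (k * (k - 1) / 2) * (pqFact p q n / pqFact p q (n - k)) =
      ∏ j ∈ Finset.range k, ((q:ℝ) ^ j * pqInt p q (n - j)) := by
  intro k
  induction k with
  | zero =>
    intro _
    simp [div_self (ne_of_gt (pqFact_pos hp hpq n))]
  | succ k ih =>
    intro hk
    have hk' : k ≤ n := by omega
    have hfs : pqFact p q (n - k) = pqFact p q (n - (k+1)) * pqInt p q (n - k) := by
      have h1 : n - k = (n - (k+1)) + 1 := by omega
      rw [h1]
      rfl
    have hexp : (k+1) * ((k+1) - 1) / 2 = k * (k - 1) / 2 + k := by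
      have h2 : (k+1) * ((k+1) - 1) = k * (k - 1) + k * 2 := by
        cases k with
        | zero => rfl
        | succ m => simp [Nat.succ_sub_one]; ring
      omega
    have hI : pqInt p q (n - k) ≠ 0 := ne_of_gt (pqInt_pos hp hpq (by omega))
    have hF : pqFact p q (n - (k+1)) ≠ 0 := ne_of_gt (pqFact_pos hp hpq _)
    rw [Finset.prod_range_succ, ← ih hk', hexp, pow_add, hfs]
    field_simp

end

lemma rep_hasFPS {g : ℂ → ℂ} {b : ℕ → ℂ} {ρ : ℝ} (hρ : 0 < ρ)
    (h : ∀ x : ℂ, ‖x‖ < ρ → HasSum (fun j => b j * x ^ j) (g x)) :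
    HasFPowerSeriesOnBall g (FormalMultilinearSeries.ofScalars ℂ b) 0 (ENNReal.ofReal ρ) := by
  refine ⟨?_, by simpa using hρ, ?_⟩
  · refine ENNReal.le_of_forall_nnreal_lt fun r hr => ?_
    have hrρ : (r : ℝ) < ρ := by
      rw [← ENNReal.ofReal_coe_nnreal] at hr
      exact (ENNReal.ofReal_lt_ofReal_iff hρ).mp hr
    apply FormalMultilinearSeries.le_radius_of_summable_norm
    have hx : ‖((r : ℝ) : ℂ)‖ < ρ := by simpa using hrρ
    have hs := ((h _ hx).summable).norm
    refine hs.congr fun n => ?_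
    rw [FormalMultilinearSeries.ofScalars_norm, norm_mul, norm_pow]
    congr 1
    simp [Real.norm_eq_abs, abs_of_nonneg r.2]
  · intro y hy
    rw [EMetric.mem_ball, edist_zero_right, ← ofReal_norm] at hy
    have hy' : ‖y‖ < ρ := (ENNReal.ofReal_lt_ofReal_iff hρ).mp hy
    rw [zero_add]
    simp only [FormalMultilinearSeries.ofScalars_apply_eq, smul_eq_mul]
    exact h y hy'

lemma rep_deriv0 {g : ℂ → ℂ} {b : ℕ → ℂ} {ρ : ℝ} (hρ : 0 < ρ)
    (h : ∀ x : ℂ, ‖x‖ < ρ → HasSum (fun j => b j * x ^ j) (g x)) :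
    deriv g 0 = b 1 := by
  have := (rep_hasFPS hρ h).hasFPowerSeriesAt.deriv
  rw [this, FormalMultilinearSeries.ofScalars_apply_eq]
  simp

lemma rep_val0 {g : ℂ → ℂ} {b : ℕ → ℂ} {ρ : ℝ} (hρ : 0 < ρ)
    (h : ∀ x : ℂ, ‖x‖ < ρ → HasSum (fun j => b j * x ^ j) (g x)) :
    g 0 = b 0 := by
  have h0 := h 0 (by simpa using hρ)
  have h1 : HasSum (fun j => b j * (0:ℂ) ^ j) (b 0) := by
    have := hasSum_single (f := fun j => b j * (0:ℂ) ^ j) 0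
      (fun j hj => by simp [zero_pow hj])
    simpa using this
  exact h0.unique h1

section
variable {p q : ℝ} (hp : 1 < p) (hpq : p < q)
include hp hpq

lemma rep_pqDeriv {g : ℂ → ℂ} {b : ℕ → ℂ} {ρ : ℝ} (hρ : 0 < ρ)
    (h : ∀ x : ℂ, ‖x‖ < ρ → HasSum (fun j => b j * x ^ j) (g x)) :
    ∀ x : ℂ, ‖x‖ < ρ / q → HasSum
      (fun j => ((pqInt p q (j+1) : ℝ) : ℂ) * b (j+1) * x ^ j) (pqDeriv p q g x) := by
  have hp0 : (0:ℝ) < p := lt_trans zero_lt_one hp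
  have hq0 : (0:ℝ) < q := lt_trans hp0 hpq
  have hpqC : ((p:ℂ) - q) ≠ 0 := by
    simp only [ne_eq, sub_eq_zero]
    exact_mod_cast ne_of_lt hpq
  intro x hx
  by_cases hx0 : x = 0
  · subst hx0
    rw [pqDeriv, if_pos rfl, rep_deriv0 hρ h]
    have := hasSum_single (f := fun j => ((pqInt p q (j+1) : ℝ) : ℂ) * b (j+1) * (0:ℂ) ^ j) 0
      (fun j hj => by simp [zero_pow hj])
    simpa [pqInt_one hp hpq] using this
  · have hxq : q * ‖x‖ < ρ := by
      have := (lt_div_iff₀ hq0).mp hx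
      linarith [this]
    have hpx : ‖(p:ℂ) * x‖ < ρ := by
      rw [norm_mul, Complex.norm_real, Real.norm_eq_abs, abs_of_pos hp0]
      nlinarith [norm_nonneg x]
    have hqx : ‖(q:ℂ) * x‖ < ρ := by
      rw [norm_mul, Complex.norm_real, Real.norm_eq_abs, abs_of_pos hq0]
      linarith
    have h1 := h _ hpx
    have h2 := h _ hqx
    have hsub := (h1.sub h2).div_const (((p:ℂ) - q) * x)
    rw [pqDeriv, if_neg hx0]
    set F : ℕ → ℂ := fun j => (b j * ((p:ℂ) * x) ^ j - b j * ((q:ℂ) * x) ^ j) /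
      (((p:ℂ) - q) * x) with hF
    have hshift := (hasSum_nat_add_iff' (f := F) 1).mpr hsub
    have hF0 : ∑ i ∈ Finset.range 1, F i = 0 := by simp [hF]
    rw [hF0, sub_zero] at hshift
    have hqpC : ((q:ℂ) - p) ≠ 0 := by
      simp only [ne_eq, sub_eq_zero]
      exact_mod_cast (ne_of_lt hpq).symm
    refine hshift.congr_fun fun j => ?_
    simp only [hF]
    rw [pqInt]
    push_cast
    rw [mul_pow, mul_pow]
    field_simp
    ring

lemma rep_iter {f : ℂ → ℂ} {a : ℕ → ℂ} {R : ℝ} (hR : 0 < R)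
    (h : ∀ x : ℂ, ‖x‖ < R → HasSum (fun j => a j * x ^ j) (f x)) :
    ∀ k, ∀ x : ℂ, ‖x‖ < R / q ^ k → HasSum
      (fun j => (a (j + k) * ∏ i ∈ Finset.range k, ((pqInt p q (j + i + 1) : ℝ) : ℂ)) * x ^ j)
      (pqDerivIter p q k f x) := by
  have hq0 : (0:ℝ) < q := by linarith
  intro k
  induction k with
  | zero =>
    intro x hx
    simp only [pow_zero, div_one] at hx
    simpa [pqDerivIter] using h x hx
  | succ k ih =>
    have hρ : 0 < R / q ^ k := div_pos hR (pow_pos hq0 k)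
    have step := rep_pqDeriv hp hpq hρ ih
    intro x hx
    have hx' : ‖x‖ < R / q ^ k / q := by
      rw [div_div, ← pow_succ]
      exact hx
    have := step x hx'
    have hD : pqDerivIter p q (k+1) f x = pqDeriv p q (pqDerivIter p q k f) x := rfl
    rw [hD]
    refine this.congr_fun fun j => ?_
    have hprod : ∏ i ∈ Finset.range (k+1), ((pqInt p q (j + i + 1) : ℝ) : ℂ)
        = ((pqInt p q (j+1) : ℝ) : ℂ) *
          ∏ i ∈ Finset.range k, ((pqInt p q (j + 1 + i + 1) : ℝ) : ℂ) := by
      rw [Finset.prod_range_succ', mul_comm]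
      congr 1
      exact Finset.prod_congr rfl fun i _ => by rw [show j + (i+1) + 1 = j+1+i+1 by omega]
    rw [show j + (k+1) = j + 1 + k by omega, hprod]
    ring

lemma iter_val {f : ℂ → ℂ} {a : ℕ → ℂ} {R : ℝ} (hR : 0 < R)
    (h : ∀ x : ℂ, ‖x‖ < R → HasSum (fun j => a j * x ^ j) (f x)) (k : ℕ) :
    pqDerivIter p q k f 0 = ((pqFact p q k : ℝ) : ℂ) * a k := by
  have hq0 : (0:ℝ) < q := by linarith
  have h0 := rep_iter hp hpq hR h k 0 (by simpa using div_pos hR (pow_pos hq0 k))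
  have hs := hasSum_single (f := fun j => (a (j + k) *
      ∏ i ∈ Finset.range k, ((pqInt p q (j + i + 1) : ℝ) : ℂ)) * (0:ℂ) ^ j) 0
    (fun j hj => by simp [zero_pow hj])
  have heq := h0.unique hs
  rw [heq]
  simp only [zero_add, pow_zero, mul_one]
  rw [pqFact_eq_prod hp hpq]
  push_cast
  ring

end

lemma one_sub_prod_le {k : ℕ} (f : ℕ → ℝ) (h0 : ∀ j, j < k → 0 ≤ f j)
    (h1 : ∀ j, j < k → f j ≤ 1) :
    1 - ∏ j ∈ Finset.range k, f j ≤ ∑ j ∈ Finset.range k, (1 - f j) := by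
  induction k with
  | zero => simp
  | succ k ih =>
    rw [Finset.prod_range_succ, Finset.sum_range_succ]
    have hP0 : 0 ≤ ∏ j ∈ Finset.range k, f j :=
      Finset.prod_nonneg fun j hj => h0 j (by simp at hj; omega)
    have hP1 : ∏ j ∈ Finset.range k, f j ≤ 1 :=
      Finset.prod_le_one (fun j hj => h0 j (by simp at hj; omega))
        (fun j hj => h1 j (by simp at hj; omega))
    have ihh := ih (fun j hj => h0 j (by omega)) (fun j hj => h1 j (by omega))
    nlinarith [h0 k (by omega), h1 k (by omega)]


theorem lorentz_upper_estimate (R p q r r₁ : ℝ) (hp : 1 < p) (hpq : p < q) (hqR : q < R)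
    (hr : 1 ≤ r) (hrr₁ : r < p * r₁ / q) (hr₁R : p * r₁ / q < p * R / q)
    (f : ℂ → ℂ) (c : ℕ → ℂ)
    (hf : ∀ z : ℂ, ‖z‖ < R → HasSum (fun k => c k * z ^ k) (f z)) :
    ∀ n : ℕ, 1 ≤ n → ∀ z : ℂ, ‖z‖ ≤ r →
      ‖lorentz p q n f z - f z‖ ≤
        p ^ n / pqInt p q n *
          (p * (q - p + 1) / (q - p) ^ 2 * ∑' k : ℕ, ‖c k‖ * (k + 1 : ℝ) * r₁ ^ k) := by
  -- basic positivity
  have hp0 : (0:ℝ) < p := by linarith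
  have hq0 : (0:ℝ) < q := by linarith
  have hqp : (0:ℝ) < q - p := by linarith
  have hr0 : (0:ℝ) < r := by linarith
  have hR0 : (0:ℝ) < R := by linarith
  have hqr_lt : q * r / p < r₁ := by
    rw [div_lt_iff₀ hp0]
    have h := (lt_div_iff₀ hq0).mp hrr₁
    nlinarith
  have hr₁0 : (0:ℝ) < r₁ := by
    have h0 : (0:ℝ) < q * r / p := by positivity
    linarith
  have hr₁R' : r₁ < R := by
    have h1 : p * r₁ < p * R := by
      have := mul_lt_mul_of_pos_right hr₁R hq0
      rwa [div_mul_cancel₀ _ (ne_of_gt hq0), div_mul_cancel₀ _ (ne_of_gt hq0)] at this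
    exact lt_of_mul_lt_mul_left h1 hp0.le
  have hrR : r < R := by
    have h2 : p * R / q < R := by
      rw [div_lt_iff₀ hq0]
      nlinarith
    linarith
  -- summability of the majorant series
  set t : ℝ := (r₁ + R) / 2 with ht
  have ht1 : r₁ < t := by simp [ht]; linarith
  have ht2 : t < R := by simp [ht]; linarith
  have ht0 : 0 < t := by linarith
  have hsum_t := hf ((t:ℝ) : ℂ) (by
    rw [Complex.norm_real, Real.norm_eq_abs, abs_of_pos ht0]; exact ht2)
  have hnorm_t : Summable (fun k => ‖c k‖ * t ^ k) := by
    refine hsum_t.summable.norm.congr fun k => ?_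
    rw [norm_mul, norm_pow, Complex.norm_real, Real.norm_eq_abs, abs_of_pos ht0]
  obtain ⟨M, hM⟩ : ∃ M, ∀ k, ‖c k‖ * t ^ k ≤ M := by
    obtain ⟨M, hM⟩ := hnorm_t.tendsto_atTop_zero.bddAbove_range
    exact ⟨M, fun k => hM (Set.mem_range_self k)⟩
  have hM0 : 0 ≤ M := le_trans (by positivity) (hM 0)
  set x : ℝ := r₁ / t with hx
  have hx0 : 0 ≤ x := by positivity
  have hx1 : x < 1 := by rw [hx, div_lt_one ht0]; exact ht1
  have hmaj : Summable (fun k : ℕ => M * ((k:ℝ) * x ^ k + x ^ k)) := by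
    have s1 : Summable (fun k : ℕ => (k:ℝ) * x ^ k) := by
      have := summable_pow_mul_geometric_of_norm_lt_one (R := ℝ) 1
        (r := x) (by rwa [Real.norm_eq_abs, abs_of_nonneg hx0])
      simpa using this
    have s2 : Summable (fun k : ℕ => x ^ k) := summable_geometric_of_lt_one hx0 hx1
    exact (s1.add s2).mul_left M
  have hxt : ∀ k : ℕ, r₁ ^ k = x ^ k * t ^ k := by
    intro k
    rw [← mul_pow, hx, div_mul_cancel₀ _ (ne_of_gt ht0)]
  have hS : Summable (fun k : ℕ => ‖c k‖ * ((k:ℝ) + 1) * r₁ ^ k) := by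
    refine Summable.of_nonneg_of_le (fun k => by positivity) (fun k => ?_) hmaj
    rw [hxt k]
    have h1 : ‖c k‖ * ((k:ℝ) + 1) * (x ^ k * t ^ k)
        = (‖c k‖ * t ^ k) * (((k:ℝ) + 1) * x ^ k) := by ring
    rw [h1]
    have h2 : (‖c k‖ * t ^ k) * (((k:ℝ) + 1) * x ^ k) ≤ M * (((k:ℝ) + 1) * x ^ k) :=
      mul_le_mul_of_nonneg_right (hM k) (by positivity)
    calc (‖c k‖ * t ^ k) * (((k:ℝ) + 1) * x ^ k) ≤ M * (((k:ℝ) + 1) * x ^ k) := h2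
      _ = M * ((k:ℝ) * x ^ k + x ^ k) := by ring
  intro n hn z hz
  set N : ℝ := pqInt p q n with hNdef
  have hNpos : 0 < N := pqInt_pos hp hpq hn
  have hNne : N ≠ 0 := ne_of_gt hNpos
  set lam : ℕ → ℝ := fun k => ∏ j ∈ Finset.range k, (q ^ j * pqInt p q (n - j) / N)
    with hlam
  have hfac0 : ∀ j, j < n → 0 ≤ q ^ j * pqInt p q (n - j) / N := by
    intro j hj
    have := pqInt_pos hp hpq (n := n - j) (by omega)
    positivity
  have hfac1 : ∀ j, j < n → q ^ j * pqInt p q (n - j) / N ≤ 1 := by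
    intro j hj
    have e1 : q ^ j * q ^ (n - j) = q ^ n := by rw [← pow_add]; congr 1; omega
    have e2 : p ^ j * p ^ (n - j) = p ^ n := by rw [← pow_add]; congr 1; omega
    have hle : p ^ j ≤ q ^ j := pow_le_pow_left₀ hp0.le hpq.le j
    have h3 : (0:ℝ) < p ^ (n - j) := pow_pos hp0 _
    have hnum : q ^ j * (q ^ (n-j) - p ^ (n-j)) ≤ q ^ n - p ^ n := by nlinarith
    rw [div_le_one hNpos, hNdef, pqInt, pqInt, ← mul_div_assoc]
    gcongr
  have hlam0 : ∀ k, k ≤ n → 0 ≤ lam k := fun k hk =>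
    Finset.prod_nonneg fun j hj => hfac0 j (by simp at hj; omega)
  have hlam1 : ∀ k, k ≤ n → lam k ≤ 1 := fun k hk =>
    Finset.prod_le_one (fun j hj => hfac0 j (by simp at hj; omega))
      (fun j hj => hfac1 j (by simp at hj; omega))
  have hscalar : ∀ k, k ≤ n → (q:ℝ) ^ (k * (k - 1) / 2) * pqBinom p q n k * pqFact p q k
      = lam k * N ^ k := by
    intro k hk
    have hBF : pqBinom p q n k * pqFact p q k = pqFact p q n / pqFact p q (n - k) := by
      rw [pqBinom]
      field_simp [ne_of_gt (pqFact_pos hp hpq k), ne_of_gt (pqFact_pos hp hpq (n-k))]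
    rw [mul_assoc, hBF, key' hp hpq k hk, hlam]
    show _ = (∏ j ∈ Finset.range k, (q ^ j * pqInt p q (n - j) / N)) * N ^ k
    rw [Finset.prod_div_distrib, Finset.prod_const, Finset.card_range,
      div_mul_cancel₀ _ (pow_ne_zero _ hNne)]
  have hNC : ((N:ℝ):ℂ) ≠ 0 := by exact_mod_cast hNne
  have hLval : lorentz p q n f z
      = ∑ k ∈ Finset.range (n+1), ((lam k : ℝ) : ℂ) * (c k * z ^ k) := by
    rw [lorentz]
    refine Finset.sum_congr rfl fun k hk => ?_
    have hk' : k ≤ n := by simp at hk; omega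
    rw [iter_val hp hpq hR0 hf k, ← hNdef, div_pow]
    have hstep : (q:ℂ) ^ (k * (k - 1) / 2) * (pqBinom p q n k : ℂ) * (z ^ k / ((N:ℝ):ℂ) ^ k)
        * (((pqFact p q k : ℝ):ℂ) * c k)
        = ((((q:ℝ) ^ (k * (k - 1) / 2) * pqBinom p q n k * pqFact p q k : ℝ)) : ℂ)
          * z ^ k / ((N:ℝ):ℂ) ^ k * c k := by
      push_cast
      ring
    rw [hstep, hscalar k hk']
    push_cast
    field_simp
  set lamE : ℕ → ℝ := fun k => if k ≤ n then lam k else 0 with hlamE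
  set g : ℕ → ℂ := fun k => ((lamE k : ℝ):ℂ) * (c k * z ^ k) - c k * z ^ k with hg
  have h1 : HasSum (fun k => ((lamE k : ℝ):ℂ) * (c k * z ^ k)) (lorentz p q n f z) := by
    have h0 := hasSum_sum_of_ne_finset_zero (L := SummationFilter.unconditional ℕ) (s := Finset.range (n+1))
      (f := fun k => ((lamE k : ℝ):ℂ) * (c k * z ^ k)) (fun k hk => by
        have : ¬ k ≤ n := by simp at hk; omega
        simp [hlamE, this])
    have hssum : ∑ k ∈ Finset.range (n+1), ((lamE k : ℝ):ℂ) * (c k * z ^ k)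
        = ∑ k ∈ Finset.range (n+1), ((lam k : ℝ):ℂ) * (c k * z ^ k) :=
      Finset.sum_congr rfl fun k hk => by
        have hk' : k ≤ n := by simp at hk; omega
        simp [hlamE, hk']
    rw [hLval, ← hssum]
    exact h0
  have h2 := hf z (lt_of_le_of_lt hz hrR)
  have hdiff : HasSum g (lorentz p q n f z - f z) := h1.sub h2
  -- key pointwise estimate
  set A : ℝ := p ^ (n+1) / ((q-p)^2 * N) with hA
  have hA0 : 0 < A := by rw [hA]; positivity
  have hqp1 : 1 < q / p := (one_lt_div hp0).mpr hpq
  have hkey : ∀ k, 1 - lamE k ≤ A * (q/p) ^ k := by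
    intro k
    by_cases hk : k ≤ n
    · have hub := one_sub_prod_le (k := k) (fun j => q ^ j * pqInt p q (n - j) / N)
        (fun j hj => hfac0 j (by omega)) (fun j hj => hfac1 j (by omega))
      have hterm : ∀ j ∈ Finset.range k, 1 - q ^ j * pqInt p q (n - j) / N
          ≤ p ^ n * (q/p) ^ j / ((q-p) * N) := by
        intro j hj
        simp only [Finset.mem_range] at hj
        have hjn : j < n := by omega
        have e1 : q ^ j * q ^ (n - j) = q ^ n := by rw [← pow_add]; congr 1; omega
        have e2 : p ^ (n - j) * p ^ j = p ^ n := by rw [← pow_add]; congr 1; omega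
        have hnum : N - q ^ j * pqInt p q (n - j) = p ^ (n - j) * pqInt p q j := by
          rw [hNdef, pqInt, pqInt, pqInt]
          field_simp
          linear_combination -e1 + e2
        have hid : 1 - q ^ j * pqInt p q (n - j) / N = p ^ (n - j) * pqInt p q j / N := by
          rw [← hnum]
          field_simp
        rw [hid]
        have hIj : pqInt p q j ≤ q ^ j / (q - p) := by
          rw [pqInt]
          have : q ^ j - p ^ j ≤ q ^ j := by nlinarith [pow_pos hp0 j]
          gcongr
        have hpj : (0:ℝ) < p ^ (n - j) := pow_pos hp0 _
        have hmulpow : p ^ (n - j) * q ^ j = p ^ n * (q / p) ^ j := by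
          rw [div_pow]
          field_simp
          linear_combination e2
        calc p ^ (n - j) * pqInt p q j / N ≤ p ^ (n - j) * (q ^ j / (q - p)) / N := by gcongr
          _ = p ^ n * (q/p) ^ j / ((q-p) * N) := by
              rw [← mul_div_assoc, div_div, ← hmulpow]
      have hgeo : ∑ j ∈ Finset.range k, (q/p) ^ j ≤ (q/p) ^ k * (p/(q-p)) := by
        rw [geom_sum_eq (ne_of_gt hqp1)]
        have hd : q / p - 1 = (q - p) / p := by field_simp
        rw [hd]
        have h2 : ((q/p) ^ k - 1) ≤ (q/p) ^ k := by linarith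
        have h3 : (0:ℝ) < (q-p)/p := by positivity
        calc ((q/p) ^ k - 1)/((q-p)/p) ≤ (q/p) ^ k/((q-p)/p) := by gcongr
          _ = (q/p) ^ k * (p/(q-p)) := by
              rw [div_div_eq_mul_div, mul_div_assoc]
      calc 1 - lamE k = 1 - lam k := by rw [hlamE]; simp [hk]
        _ ≤ ∑ j ∈ Finset.range k, (1 - q ^ j * pqInt p q (n - j) / N) := hub
        _ ≤ ∑ j ∈ Finset.range k, p ^ n * (q/p) ^ j / ((q-p) * N) :=
            Finset.sum_le_sum hterm
        _ = p ^ n / ((q-p) * N) * ∑ j ∈ Finset.range k, (q/p) ^ j := by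
            rw [Finset.mul_sum]
            exact Finset.sum_congr rfl fun j _ => by ring
        _ ≤ p ^ n / ((q-p) * N) * ((q/p) ^ k * (p/(q-p))) := by
            have : (0:ℝ) ≤ p ^ n / ((q-p) * N) := by positivity
            exact mul_le_mul_of_nonneg_left hgeo this
        _ = A * (q/p) ^ k := by
            rw [hA]
            field_simp
            ring
    · have hE : lamE k = 0 := by rw [hlamE]; simp [hk]
      rw [hE, sub_zero]
      have hpow : (q/p) ^ (n+1) ≤ (q/p) ^ k := pow_le_pow_right₀ hqp1.le (by omega)
      have step1 : 1 ≤ A * (q/p) ^ (n+1) := by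
        have hq1 : p ^ (n+1) * (q/p) ^ (n+1) = q ^ (n+1) := by
          rw [← mul_pow, mul_div_cancel₀ _ (ne_of_gt hp0)]
        have hval : A * (q/p) ^ (n+1) = q ^ (n+1) / ((q-p)^2 * N) := by
          rw [hA, div_mul_eq_mul_div, hq1]
        rw [hval, le_div_iff₀ (by positivity), one_mul]
        have hNle : (q-p) * N ≤ q ^ n := by
          rw [hNdef, pqInt, mul_div_cancel₀ _ (ne_of_gt hqp)]
          nlinarith [pow_pos hp0 n]
        have : (q-p)^2 * N = (q-p) * ((q-p) * N) := by ring
        rw [this]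
        calc (q-p) * ((q-p) * N) ≤ (q-p) * q ^ n := by
              have h0 : 0 ≤ (q - p) * N := by positivity
              exact mul_le_mul_of_nonneg_left hNle hqp.le
          _ ≤ q * q ^ n := by
              have : (0:ℝ) ≤ q ^ n := by positivity
              nlinarith
          _ = q ^ (n+1) := by ring
      calc 1 ≤ A * (q/p) ^ (n+1) := step1
        _ ≤ A * (q/p) ^ k := mul_le_mul_of_nonneg_left hpow hA0.le
  -- term bound
  set A2 : ℝ := p ^ n / N * (p * (q - p + 1) / (q - p)^2) with hA2
  have hbound : ∀ k, ‖g k‖ ≤ A2 * (‖c k‖ * ((k:ℝ)+1) * r₁ ^ k) := by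
    intro k
    have hlamE0 : 0 ≤ lamE k := by
      by_cases h : k ≤ n
      · simpa [hlamE, h] using hlam0 k h
      · simp [hlamE, h]
    have hlamE1 : lamE k ≤ 1 := by
      by_cases h : k ≤ n
      · simpa [hlamE, h] using hlam1 k h
      · simp [hlamE, h]
    have hnorm : ‖g k‖ = (1 - lamE k) * (‖c k‖ * ‖z‖ ^ k) := by
      show ‖((lamE k : ℝ):ℂ) * (c k * z ^ k) - c k * z ^ k‖ = _
      have : ((lamE k:ℝ):ℂ) * (c k * z ^ k) - c k * z ^ k
          = -( (((1 - lamE k : ℝ)):ℂ) * (c k * z ^ k)) := by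
        push_cast
        ring
      rw [this, norm_neg, norm_mul, norm_mul, norm_pow, Complex.norm_real,
        Real.norm_eq_abs, abs_of_nonneg (by linarith)]
    rw [hnorm]
    have hzk : ‖z‖ ^ k ≤ r ^ k := pow_le_pow_left₀ (norm_nonneg z) hz k
    have c1 : (1 - lamE k) * (‖c k‖ * ‖z‖ ^ k) ≤ (A * (q/p) ^ k) * (‖c k‖ * r ^ k) := by
      have hc0 : 0 ≤ ‖c k‖ * ‖z‖ ^ k := by positivity
      have hc1 : ‖c k‖ * ‖z‖ ^ k ≤ ‖c k‖ * r ^ k :=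
        mul_le_mul_of_nonneg_left hzk (norm_nonneg _)
      have h1k : 0 ≤ 1 - lamE k := by linarith
      exact mul_le_mul (hkey k) hc1 hc0 (mul_nonneg hA0.le (by positivity))
    have c2 : (A * (q/p) ^ k) * (‖c k‖ * r ^ k) = A * ‖c k‖ * (q * r / p) ^ k := by
      rw [show (q * r / p) ^ k = (q/p) ^ k * r ^ k by rw [← mul_pow]; congr 1; ring]
      ring
    have c3 : (q * r / p) ^ k ≤ r₁ ^ k := pow_le_pow_left₀ (by positivity) hqr_lt.le k
    have c4 : A ≤ A2 * ((k:ℝ)+1) := by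
      have he : A2 * ((k:ℝ)+1) = A * ((q-p+1) * ((k:ℝ)+1)) := by
        rw [hA2, hA]
        field_simp
        ring
      rw [he]
      have h1 : (1:ℝ) ≤ (q-p+1) * ((k:ℝ)+1) := by
        have : (1:ℝ) ≤ q - p + 1 := by linarith
        have hk1 : (1:ℝ) ≤ (k:ℝ) + 1 := by
          have := Nat.cast_nonneg (α := ℝ) k
          linarith
        nlinarith
      nlinarith
    calc (1 - lamE k) * (‖c k‖ * ‖z‖ ^ k) ≤ (A * (q/p) ^ k) * (‖c k‖ * r ^ k) := c1
      _ = A * ‖c k‖ * (q * r / p) ^ k := c2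
      _ ≤ A * ‖c k‖ * r₁ ^ k := by
          have : 0 ≤ A * ‖c k‖ := by positivity
          exact mul_le_mul_of_nonneg_left c3 this
      _ ≤ (A2 * ((k:ℝ)+1)) * ‖c k‖ * r₁ ^ k := by
          have h0 : (0:ℝ) ≤ ‖c k‖ * r₁ ^ k := by positivity
          nlinarith [c4, h0]
      _ = A2 * (‖c k‖ * ((k:ℝ)+1) * r₁ ^ k) := by ring
  have hS2 : Summable (fun k : ℕ => A2 * (‖c k‖ * ((k:ℝ)+1) * r₁ ^ k)) := hS.mul_left A2
  have hgs : Summable (fun k => ‖g k‖) :=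
    Summable.of_nonneg_of_le (fun _ => norm_nonneg _) hbound hS2
  rw [← hdiff.tsum_eq]
  calc ‖∑' k, g k‖ ≤ ∑' k, ‖g k‖ := norm_tsum_le_tsum_norm hgs
    _ ≤ ∑' k, A2 * (‖c k‖ * ((k:ℝ)+1) * r₁ ^ k) := Summable.tsum_le_tsum hbound hgs hS2
    _ = A2 * ∑' k, ‖c k‖ * ((k:ℝ)+1) * r₁ ^ k := tsum_mul_left
    _ = p ^ n / N * (p * (q - p + 1) / (q - p) ^ 2
        * ∑' (k : ℕ), ‖c k‖ * ((k:ℝ) + 1) * r₁ ^ k) := by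
          rw [hA2]
          ring
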